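/- Let N ≥ 1. For i ∈ {1,…,N}, let Aᵢ ∈ ℝ^{nᵢ×nᵢ}, Bᵢ⁽¹⁾ ∈ ℝ^{nᵢ×pᵢ}, symmetric positive definite Qᵢ ∈ ℝ^{nᵢ×nᵢ}, scalars εᵢ > 0, and coupling blocks h_{i,j} ∈ ℝ^{pᵢ×nⱼ} for |i−j| ≤ 1 (set h_{i,j} = 0 for |i−j| > 1). Define Ĥ_{i,j} = Qᵢ Bᵢ⁽¹⁾ h_{i,j}, 𝒮ᵢ = −(Aᵢ'Qᵢ + QᵢAᵢ) − (Ĥ_{i,i} + Ĥ_{i,i}') − εᵢ I, and the messenger matrices ℳ₁ = 𝒮₁ and ℳᵢ = 𝒮ᵢ − (Ĥ_{i-1,i}' + Ĥ_{i,i-1}) ℳ_{i-1}⁻¹ (Ĥ_{i-1,i} + Ĥ_{i,i-1}') for i ≥ 2. Suppose ℳᵢ is well-defined and positive definite for every i ∈ {1,…,N}. Then, with A = diag(A₁,…,A_N), B⁽¹⁾ = diag(B₁⁽¹⁾,…,B_N⁽¹⁾), Q = diag(Q₁,…,Q_N), H = [h_{i,j}], and ε = min(ε₁,…,ε_N), the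 matrix W = −(A + B⁽¹⁾H)'Q − Q(A + B⁽¹⁾H) − εI is positive definite. -/

import Mathlib

open Matrix Finset

namespace Stmt7Aux

lemma dot_sigma {k : Type*} [Fintype k] {m' : k → Type*} [∀ i, Fintype (m' i)]
    (x y : (Σ i, m' i) → ℝ) :
    x ⬝ᵥ y = ∑ i, (fun a => x ⟨i, a⟩) ⬝ᵥ (fun a => y ⟨i, a⟩) := by
  rw [dotProduct, ← Finset.univ_sigma_univ, Finset.sum_sigma]
  rfl

lemma bd_mulVec {k : Type*} [Fintype k] [DecidableEq k] {m' n' : k → Type*}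
    [∀ i, Fintype (m' i)] [∀ i, Fintype (n' i)]
    (M : ∀ i, Matrix (m' i) (n' i) ℝ) (v : (Σ i, n' i) → ℝ) (i : k) (a : m' i) :
    (blockDiagonal' M *ᵥ v) ⟨i, a⟩ = (M i *ᵥ fun b => v ⟨i, b⟩) a := by
  simp only [mulVec, dotProduct]
  rw [← Finset.univ_sigma_univ, Finset.sum_sigma]
  rw [Finset.sum_eq_single_of_mem i (Finset.mem_univ i)]
  · simp [blockDiagonal'_apply_eq]
  · intro j _ hj
    apply Finset.sum_eq_zero
    intro b _
    rw [blockDiagonal'_apply_ne _ _ _ (Ne.symm hj), zero_mul]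

lemma dot_tr {m l : Type*} [Fintype m] [Fintype l] (P : Matrix m l ℝ) (v : l → ℝ) (w : m → ℝ) :
    v ⬝ᵥ (Pᵀ *ᵥ w) = (P *ᵥ v) ⬝ᵥ w := by
  rw [dotProduct_mulVec, vecMul_transpose]

lemma dot_transpose {m : Type*} [Fintype m] (P : Matrix m m ℝ) (x : m → ℝ) :
    x ⬝ᵥ (Pᵀ *ᵥ x) = x ⬝ᵥ (P *ᵥ x) := by
  rw [dot_tr, dotProduct_comm]

lemma expand_sq {m : Type*} [Fintype m] [DecidableEq m] (M : Matrix m m ℝ)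
    (hsym : Mᵀ = M) (hdet : IsUnit M.det) (u w : m → ℝ) :
    (u - M⁻¹ *ᵥ w) ⬝ᵥ (M *ᵥ (u - M⁻¹ *ᵥ w))
      = u ⬝ᵥ (M *ᵥ u) - u ⬝ᵥ w - w ⬝ᵥ u + w ⬝ᵥ (M⁻¹ *ᵥ w) := by
  have hMw : M *ᵥ (M⁻¹ *ᵥ w) = w := by
    rw [mulVec_mulVec, mul_nonsing_inv _ hdet, one_mulVec]
  have h1 : (M⁻¹ *ᵥ w) ⬝ᵥ (M *ᵥ u) = w ⬝ᵥ u := by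
    rw [dotProduct_mulVec, ← mulVec_transpose, hsym, hMw]
  have h2 : (M⁻¹ *ᵥ w) ⬝ᵥ (M *ᵥ (M⁻¹ *ᵥ w)) = w ⬝ᵥ (M⁻¹ *ᵥ w) := by
    rw [hMw, dotProduct_comm]
  rw [mulVec_sub, sub_dotProduct, dotProduct_sub, dotProduct_sub, hMw, h1,
    dotProduct_comm (M⁻¹ *ᵥ w) w]
  ring

lemma sum_tridiag (t : ℕ → ℕ → ℝ) (ht : ∀ i j, (i + 1 < j ∨ j + 1 < i) → t i j = 0) :
    ∀ m : ℕ, ∑ i ∈ range (m + 1), ∑ j ∈ range (m + 1), t i j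
      = ∑ i ∈ range (m + 1), t i i + ∑ i ∈ range m, (t i (i + 1) + t (i + 1) i) := by
  intro m
  induction m with
  | zero => simp
  | succ m ih =>
    have hrow : ∑ j ∈ range (m + 1), t (m + 1) j = t (m + 1) m := by
      rw [Finset.sum_eq_single_of_mem m (by simp)]
      intro j hj hjm
      rw [Finset.mem_range] at hj
      exact ht _ _ (Or.inr (by omega))
    have hcol : ∑ i ∈ range (m + 1), t i (m + 1) = t m (m + 1) := by
      rw [Finset.sum_eq_single_of_mem m (by simp)]
      intro j hj hjm
      rw [Finset.mem_range] at hj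
      exact ht _ _ (Or.inl (by omega))
    have expand : ∑ i ∈ range (m + 2), ∑ j ∈ range (m + 2), t i j
        = (∑ i ∈ range (m + 1), ∑ j ∈ range (m + 1), t i j
          + ∑ i ∈ range (m + 1), t i (m + 1))
          + (∑ j ∈ range (m + 1), t (m + 1) j + t (m + 1) (m + 1)) := by
      rw [Finset.sum_range_succ]
      congr 1
      · rw [← Finset.sum_add_distrib]
        exact Finset.sum_congr rfl fun i _ => Finset.sum_range_succ _ _
      · exact Finset.sum_range_succ _ _
    rw [expand, ih, hrow, hcol, Finset.sum_range_succ (fun i => t i i) (m + 1),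
      Finset.sum_range_succ (fun i => t i i) m,
      Finset.sum_range_succ (fun i => t i (i + 1) + t (i + 1) i) m]
    ring

end Stmt7Aux

namespace Stmt7Aux2
open Stmt7Aux

lemma dot_mulVec_sigma {k : Type*} [Fintype k] {p' n' : k → Type*} [∀ i, Fintype (p' i)]
    [∀ i, Fintype (n' i)] (Hm : Matrix (Σ i, p' i) (Σ i, n' i) ℝ) (x : (Σ i, n' i) → ℝ)
    (i : k) (u : p' i → ℝ) :
    u ⬝ᵥ (fun c => (Hm *ᵥ x) ⟨i, c⟩)
      = ∑ j, u ⬝ᵥ ((Matrix.of fun c b => Hm ⟨i, c⟩ ⟨j, b⟩) *ᵥ fun b => x ⟨j, b⟩) := by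
  simp only [dotProduct, mulVec, Matrix.of_apply, Finset.mul_sum]
  simp_rw [← Finset.univ_sigma_univ, Finset.sum_sigma]
  rw [Finset.sum_comm]

lemma sq_sum (n : ℕ → ℕ) (Mm Ss : (i : ℕ) → Matrix (Fin (n i)) (Fin (n i)) ℝ)
    (Cc : (i : ℕ) → Matrix (Fin (n i)) (Fin (n (i + 1))) ℝ) (xv : (i : ℕ) → Fin (n i) → ℝ)
    (h0 : Mm 0 = Ss 0) :
    ∀ N : ℕ, (∀ i ≤ N, (Mm i)ᵀ = Mm i ∧ IsUnit (Mm i).det) →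
    (∀ i < N, Mm (i + 1) = Ss (i + 1) - (Cc i)ᵀ * (Mm i)⁻¹ * (Cc i)) →
    ∑ i ∈ Finset.range (N + 1),
        (xv i - (Mm i)⁻¹ *ᵥ (Cc i *ᵥ xv (i + 1))) ⬝ᵥ
          (Mm i *ᵥ (xv i - (Mm i)⁻¹ *ᵥ (Cc i *ᵥ xv (i + 1))))
      = ∑ i ∈ Finset.range (N + 1), xv i ⬝ᵥ (Ss i *ᵥ xv i)
        - ∑ i ∈ Finset.range N,
            (xv i ⬝ᵥ (Cc i *ᵥ xv (i + 1)) + (Cc i *ᵥ xv (i + 1)) ⬝ᵥ xv i)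
        + (Cc N *ᵥ xv (N + 1)) ⬝ᵥ ((Mm N)⁻¹ *ᵥ (Cc N *ᵥ xv (N + 1)))
        - xv N ⬝ᵥ (Cc N *ᵥ xv (N + 1)) - (Cc N *ᵥ xv (N + 1)) ⬝ᵥ xv N := by
  intro N
  induction N with
  | zero =>
    intro hMi _
    obtain ⟨hs, hd⟩ := hMi 0 le_rfl
    simp only [zero_add, Finset.sum_range_one, Finset.sum_range_zero]
    rw [expand_sq _ hs hd, h0]
    ring
  | succ N ih =>
    intro hMi hrec
    have ihh := ih (fun i hi => hMi i (by omega)) (fun i hi => hrec i (by omega))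
    rw [Finset.sum_range_succ
      (fun i => (xv i - (Mm i)⁻¹ *ᵥ (Cc i *ᵥ xv (i + 1))) ⬝ᵥ
          (Mm i *ᵥ (xv i - (Mm i)⁻¹ *ᵥ (Cc i *ᵥ xv (i + 1))))) (N + 1), ihh]
    obtain ⟨hs, hd⟩ := hMi (N + 1) le_rfl
    rw [expand_sq _ hs hd]
    have hq : xv (N + 1) ⬝ᵥ (Mm (N + 1) *ᵥ xv (N + 1))
        = xv (N + 1) ⬝ᵥ (Ss (N + 1) *ᵥ xv (N + 1))
          - (Cc N *ᵥ xv (N + 1)) ⬝ᵥ ((Mm N)⁻¹ *ᵥ (Cc N *ᵥ xv (N + 1))) := by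
      rw [hrec N (by omega), sub_mulVec, dotProduct_sub]
      congr 1
      rw [← mulVec_mulVec, ← mulVec_mulVec, dot_tr]
    rw [hq, Finset.sum_range_succ (fun i => xv i ⬝ᵥ (Ss i *ᵥ xv i)) (N + 1),
      Finset.sum_range_succ
        (fun i => xv i ⬝ᵥ (Cc i *ᵥ xv (i + 1)) + (Cc i *ᵥ xv (i + 1)) ⬝ᵥ xv i) N]
    ring

end Stmt7Aux2



open Stmt7Aux Stmt7Aux2


open Matrix

/-- Given subsystem data `A i`, `B1 i`, symmetric positive definite `Q i`,
scalars `ε i > 0`, coupling blocks `h i j` (zero for `|i - j| > 1`),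
`Ĥ i j = Q i * B1 i * h i j`, `S i = -(A iᵀ Q i + Q i A i) - (Ĥ i i + Ĥ i iᵀ) - ε i • I`,
and messenger matrices `M 0 = S 0`,
`M (i+1) = S (i+1) - (Ĥ i (i+1)ᵀ + Ĥ (i+1) i) (M i)⁻¹ (Ĥ i (i+1) + Ĥ (i+1) iᵀ)`,
if every `M i` is (well-defined and) positive definite, then with `A = diag(A i)`,
`B⁽¹⁾ = diag(B1 i)`, `Q = diag(Q i)`, `H = [h i j]` and `εmin = min_i ε i`, the matrix
`W = -(A + B⁽¹⁾H)ᵀ Q - Q (A + B⁽¹⁾H) - εmin • I` is positive definite. -/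
theorem stmt7 (N : ℕ) (n p : ℕ → ℕ)
    (A : (i : ℕ) → Matrix (Fin (n i)) (Fin (n i)) ℝ)
    (B1 : (i : ℕ) → Matrix (Fin (n i)) (Fin (p i)) ℝ)
    (Q : (i : ℕ) → Matrix (Fin (n i)) (Fin (n i)) ℝ)
    (hQ : ∀ i : Fin (N + 1), (Q (i : ℕ)).PosDef)
    (ε : ℕ → ℝ) (hε : ∀ i : Fin (N + 1), 0 < ε (i : ℕ))
    (h : (i j : ℕ) → Matrix (Fin (p i)) (Fin (n j)) ℝ)
    (hzero : ∀ i j : ℕ, (i + 1 < j ∨ j + 1 < i) → h i j = 0)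
    (H : Matrix ((i : Fin (N + 1)) × Fin (p i)) ((i : Fin (N + 1)) × Fin (n i)) ℝ)
    (hH : ∀ (i j : Fin (N + 1)) (a : Fin (p i)) (b : Fin (n j)),
      H ⟨i, a⟩ ⟨j, b⟩ = h i j a b)
    (M : (i : ℕ) → Matrix (Fin (n i)) (Fin (n i)) ℝ)
    (hM0 : M 0 = -((A 0)ᵀ * Q 0 + Q 0 * A 0)
        - (Q 0 * B1 0 * h 0 0 + (Q 0 * B1 0 * h 0 0)ᵀ)
        - ε 0 • (1 : Matrix (Fin (n 0)) (Fin (n 0)) ℝ))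
    (hMs : ∀ i : ℕ, M (i + 1) =
        (-((A (i + 1))ᵀ * Q (i + 1) + Q (i + 1) * A (i + 1))
          - (Q (i + 1) * B1 (i + 1) * h (i + 1) (i + 1)
              + (Q (i + 1) * B1 (i + 1) * h (i + 1) (i + 1))ᵀ)
          - ε (i + 1) • (1 : Matrix (Fin (n (i + 1))) (Fin (n (i + 1))) ℝ))
        - ((Q i * B1 i * h i (i + 1))ᵀ + Q (i + 1) * B1 (i + 1) * h (i + 1) i)
          * (M i)⁻¹
          * (Q i * B1 i * h i (i + 1) + (Q (i + 1) * B1 (i + 1) * h (i + 1) i)ᵀ))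
    (hMpos : ∀ i : Fin (N + 1), (M (i : ℕ)).PosDef) :
    ∀ εmin : ℝ,
      εmin = Finset.univ.inf' Finset.univ_nonempty (fun i : Fin (N + 1) => ε (i : ℕ)) →
      (-(Matrix.blockDiagonal' (fun i : Fin (N + 1) => A i)
            + Matrix.blockDiagonal' (fun i : Fin (N + 1) => B1 i) * H)ᵀ
          * Matrix.blockDiagonal' (fun i : Fin (N + 1) => Q i)
        - Matrix.blockDiagonal' (fun i : Fin (N + 1) => Q i)
          * (Matrix.blockDiagonal' (fun i : Fin (N + 1) => A i)
            + Matrix.blockDiagonal' (fun i : Fin (N + 1) => B1 i) * H)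
        - εmin •
          (1 : Matrix ((i : Fin (N + 1)) × Fin (n i)) ((i : Fin (N + 1)) × Fin (n i)) ℝ)).PosDef := by
  intro εmin hεmin
  classical
  have hQiT : ∀ i : Fin (N + 1), (Q (i : ℕ))ᵀ = Q (i : ℕ) := fun i => by
    rw [← conjTranspose_eq_transpose_of_trivial]; exact (hQ i).1
  have hQ'T : (Matrix.blockDiagonal' (fun i : Fin (N + 1) => Q (i : ℕ)))ᵀ = (Matrix.blockDiagonal' (fun i : Fin (N + 1) => Q (i : ℕ))) := by
    rw [blockDiagonal'_transpose]
    exact congrArg _ (funext fun i => hQiT i)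
  have hKQ : ((Matrix.blockDiagonal' (fun i : Fin (N + 1) => A (i : ℕ))) + (Matrix.blockDiagonal' (fun i : Fin (N + 1) => B1 (i : ℕ))) * H)ᵀ * (Matrix.blockDiagonal' (fun i : Fin (N + 1) => Q (i : ℕ))) = ((Matrix.blockDiagonal' (fun i : Fin (N + 1) => Q (i : ℕ))) * ((Matrix.blockDiagonal' (fun i : Fin (N + 1) => A (i : ℕ))) + (Matrix.blockDiagonal' (fun i : Fin (N + 1) => B1 (i : ℕ))) * H))ᵀ := by
    rw [transpose_mul, hQ'T]
  refine posDef_iff_dotProduct_mulVec.mpr ⟨?_, ?_⟩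
  · show _ᴴ = _
    rw [conjTranspose_eq_transpose_of_trivial]
    simp only [transpose_sub, transpose_smul, transpose_one, transpose_mul, transpose_neg,
      transpose_transpose, hQ'T, neg_mul, mul_neg]
    abel
  · intro x hx
    have hstar : star x = x := funext fun q => star_trivial _
    rw [hstar]
    obtain ⟨xv, hxv, hxvz⟩ : ∃ xv : (i : ℕ) → Fin (n i) → ℝ,
        (∀ i : Fin (N + 1), (fun a => x ⟨i, a⟩) = xv (i : ℕ)) ∧
          (∀ j : ℕ, N + 1 ≤ j → xv j = 0) :=
      ⟨fun i => if hi : i < N + 1 then (fun a => x ⟨⟨i, hi⟩, a⟩) else 0,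
        fun i => by
          show (fun a => x ⟨i, a⟩)
            = dite ((i : ℕ) < N + 1) (fun hi => fun a => x ⟨⟨(i : ℕ), hi⟩, a⟩) (fun _ => 0)
          rw [dif_pos i.isLt],
        fun j hj => dif_neg (by omega)⟩
    have ht0 : ∀ i j : ℕ, (i + 1 < j ∨ j + 1 < i) →
        xv i ⬝ᵥ ((Q i * B1 i * h i j) *ᵥ xv j) = 0 := by
      intro i j hij
      rw [hzero i j hij, Matrix.mul_zero, zero_mulVec, dotProduct_zero]
    have hxx : x ⬝ᵥ x = ∑ i ∈ Finset.range (N + 1), (xv i ⬝ᵥ xv i) := by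
      rw [dot_sigma, ← Fin.sum_univ_eq_sum_range (fun i => (xv i ⬝ᵥ xv i)) (N + 1)]
      exact Finset.sum_congr rfl fun i _ => by rw [hxv i]
    have T1 : x ⬝ᵥ (((Matrix.blockDiagonal' (fun i : Fin (N + 1) => Q (i : ℕ))) * (Matrix.blockDiagonal' (fun i : Fin (N + 1) => A (i : ℕ)))) *ᵥ x) = ∑ i ∈ Finset.range (N + 1), (xv i ⬝ᵥ ((Q i * A i) *ᵥ xv i)) := by
      rw [← mulVec_mulVec, dot_sigma, ← Fin.sum_univ_eq_sum_range (fun i => (xv i ⬝ᵥ ((Q i * A i) *ᵥ xv i))) (N + 1)]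
      refine Finset.sum_congr rfl fun i _ => ?_
      have eQ : (fun a => ((Matrix.blockDiagonal' (fun i : Fin (N + 1) => Q (i : ℕ))) *ᵥ ((Matrix.blockDiagonal' (fun i : Fin (N + 1) => A (i : ℕ))) *ᵥ x)) ⟨i, a⟩)
          = Q (i : ℕ) *ᵥ (fun b => ((Matrix.blockDiagonal' (fun i : Fin (N + 1) => A (i : ℕ))) *ᵥ x) ⟨i, b⟩) :=
        funext fun a => bd_mulVec (fun i : Fin (N + 1) => Q (i : ℕ)) _ i a
      have eA : (fun b => ((Matrix.blockDiagonal' (fun i : Fin (N + 1) => A (i : ℕ))) *ᵥ x) ⟨i, b⟩)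
          = A (i : ℕ) *ᵥ (fun c => x ⟨i, c⟩) :=
        funext fun b => bd_mulVec (fun i : Fin (N + 1) => A (i : ℕ)) _ i b
      rw [eQ, eA, mulVec_mulVec, hxv i]
    have T2 : x ⬝ᵥ (((Matrix.blockDiagonal' (fun i : Fin (N + 1) => Q (i : ℕ))) * ((Matrix.blockDiagonal' (fun i : Fin (N + 1) => B1 (i : ℕ))) * H)) *ᵥ x)
        = ∑ i ∈ Finset.range (N + 1), ∑ j ∈ Finset.range (N + 1),
            xv i ⬝ᵥ ((Q i * B1 i * h i j) *ᵥ xv j) := by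
      rw [← mulVec_mulVec, ← mulVec_mulVec, dot_sigma,
        ← Fin.sum_univ_eq_sum_range
          (fun i => ∑ j ∈ Finset.range (N + 1), xv i ⬝ᵥ ((Q i * B1 i * h i j) *ᵥ xv j)) (N + 1)]
      refine Finset.sum_congr rfl fun i _ => ?_
      have eQ : (fun a => ((Matrix.blockDiagonal' (fun i : Fin (N + 1) => Q (i : ℕ))) *ᵥ ((Matrix.blockDiagonal' (fun i : Fin (N + 1) => B1 (i : ℕ))) *ᵥ (H *ᵥ x))) ⟨i, a⟩)
          = Q (i : ℕ) *ᵥ (fun b => ((Matrix.blockDiagonal' (fun i : Fin (N + 1) => B1 (i : ℕ))) *ᵥ (H *ᵥ x)) ⟨i, b⟩) :=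
        funext fun a => bd_mulVec (fun i : Fin (N + 1) => Q (i : ℕ)) _ i a
      have eG : (fun b => ((Matrix.blockDiagonal' (fun i : Fin (N + 1) => B1 (i : ℕ))) *ᵥ (H *ᵥ x)) ⟨i, b⟩)
          = B1 (i : ℕ) *ᵥ (fun c => (H *ᵥ x) ⟨i, c⟩) :=
        funext fun b => bd_mulVec (fun i : Fin (N + 1) => B1 (i : ℕ)) _ i b
      rw [eQ, eG, mulVec_mulVec, dotProduct_mulVec,
        dot_mulVec_sigma H x i ((fun a => x ⟨i, a⟩) ᵥ* (Q (i : ℕ) * B1 (i : ℕ))),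
        ← Fin.sum_univ_eq_sum_range (fun j => xv (i : ℕ) ⬝ᵥ ((Q i * B1 i * h i j) *ᵥ xv j)) (N + 1)]
      refine Finset.sum_congr rfl fun j _ => ?_
      have eH : (Matrix.of fun c b => H ⟨i, c⟩ ⟨j, b⟩) = h (i : ℕ) (j : ℕ) := by
        ext c b; exact hH i j c b
      rw [eH, ← dotProduct_mulVec, mulVec_mulVec, hxv i, hxv j]
    have htri : ∑ i ∈ Finset.range (N + 1), ∑ j ∈ Finset.range (N + 1),
          xv i ⬝ᵥ ((Q i * B1 i * h i j) *ᵥ xv j)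
        = ∑ i ∈ Finset.range (N + 1), (xv i ⬝ᵥ ((Q i * B1 i * h i i) *ᵥ xv i))
          + ∑ i ∈ Finset.range N, ((xv i ⬝ᵥ ((Q i * B1 i * h i (i + 1)) *ᵥ xv (i + 1))) + (xv (i + 1) ⬝ᵥ ((Q (i + 1) * B1 (i + 1) * h (i + 1) i) *ᵥ xv i))) :=
      sum_tridiag _ ht0 N
    have key : x ⬝ᵥ ((-((Matrix.blockDiagonal' (fun i : Fin (N + 1) => A (i : ℕ))) + (Matrix.blockDiagonal' (fun i : Fin (N + 1) => B1 (i : ℕ))) * H)ᵀ * (Matrix.blockDiagonal' (fun i : Fin (N + 1) => Q (i : ℕ))) - (Matrix.blockDiagonal' (fun i : Fin (N + 1) => Q (i : ℕ))) * ((Matrix.blockDiagonal' (fun i : Fin (N + 1) => A (i : ℕ))) + (Matrix.blockDiagonal' (fun i : Fin (N + 1) => B1 (i : ℕ))) * H) - εmin • 1) *ᵥ x)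
        = ∑ i ∈ Finset.range (N + 1), (-2 * (xv i ⬝ᵥ ((Q i * A i) *ᵥ xv i)) - 2 * (xv i ⬝ᵥ ((Q i * B1 i * h i i) *ᵥ xv i)) - εmin * (xv i ⬝ᵥ xv i))
          - ∑ i ∈ Finset.range N, 2 * ((xv i ⬝ᵥ ((Q i * B1 i * h i (i + 1)) *ᵥ xv (i + 1))) + (xv (i + 1) ⬝ᵥ ((Q (i + 1) * B1 (i + 1) * h (i + 1) i) *ᵥ xv i))) := by
      rw [sub_mulVec, sub_mulVec, dotProduct_sub, dotProduct_sub, neg_mul, neg_mulVec,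
        dotProduct_neg, hKQ, dot_transpose, smul_mulVec, one_mulVec, dotProduct_smul,
        smul_eq_mul, mul_add, add_mulVec, dotProduct_add, T1, T2, htri, hxx]
      simp only [Finset.sum_sub_distrib, Finset.sum_add_distrib, ← Finset.mul_sum]
      ring
    have hMsym : ∀ i : ℕ, i ≤ N → (M i)ᵀ = M i ∧ IsUnit (M i).det := by
      intro i hi
      have hp : (M i).PosDef := hMpos ⟨i, by omega⟩
      refine ⟨?_, isUnit_iff_ne_zero.mpr hp.det_pos.ne'⟩
      rw [← conjTranspose_eq_transpose_of_trivial]; exact hp.1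
    have hrecN : ∀ i : ℕ, M (i + 1) =
        (-((A (i + 1))ᵀ * Q (i + 1) + Q (i + 1) * A (i + 1))
          - (Q (i + 1) * B1 (i + 1) * h (i + 1) (i + 1)
              + (Q (i + 1) * B1 (i + 1) * h (i + 1) (i + 1))ᵀ)
          - ε (i + 1) • (1 : Matrix (Fin (n (i + 1))) (Fin (n (i + 1))) ℝ))
        - (Q i * B1 i * h i (i + 1) + (Q (i + 1) * B1 (i + 1) * h (i + 1) i)ᵀ)ᵀ * (M i)⁻¹ * (Q i * B1 i * h i (i + 1) + (Q (i + 1) * B1 (i + 1) * h (i + 1) i)ᵀ) := by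
      intro i
      rw [hMs i]
      have e1 : (Q i * B1 i * h i (i + 1) + (Q (i + 1) * B1 (i + 1) * h (i + 1) i)ᵀ)ᵀ = (Q i * B1 i * h i (i + 1))ᵀ + Q (i + 1) * B1 (i + 1) * h (i + 1) i := by
        rw [transpose_add, transpose_transpose]
      rw [e1]
    have key2 : ∑ i ∈ Finset.range (N + 1), ((xv i - (M i)⁻¹ *ᵥ ((Q i * B1 i * h i (i + 1) + (Q (i + 1) * B1 (i + 1) * h (i + 1) i)ᵀ) *ᵥ xv (i + 1))) ⬝ᵥ (M i *ᵥ (xv i - (M i)⁻¹ *ᵥ ((Q i * B1 i * h i (i + 1) + (Q (i + 1) * B1 (i + 1) * h (i + 1) i)ᵀ) *ᵥ xv (i + 1)))))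
        = ∑ i ∈ Finset.range (N + 1), (xv i ⬝ᵥ ((-((A i)ᵀ * Q i + Q i * A i) - (Q i * B1 i * h i i + (Q i * B1 i * h i i)ᵀ) - ε i • (1 : Matrix (Fin (n i)) (Fin (n i)) ℝ)) *ᵥ xv i))
          - ∑ i ∈ Finset.range N,
              (xv i ⬝ᵥ ((Q i * B1 i * h i (i + 1) + (Q (i + 1) * B1 (i + 1) * h (i + 1) i)ᵀ) *ᵥ xv (i + 1)) + ((Q i * B1 i * h i (i + 1) + (Q (i + 1) * B1 (i + 1) * h (i + 1) i)ᵀ) *ᵥ xv (i + 1)) ⬝ᵥ xv i) := by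
      have hss := sq_sum n M
        (fun i => (-((A i)ᵀ * Q i + Q i * A i) - (Q i * B1 i * h i i + (Q i * B1 i * h i i)ᵀ) - ε i • (1 : Matrix (Fin (n i)) (Fin (n i)) ℝ)))
        (fun i => (Q i * B1 i * h i (i + 1) + (Q (i + 1) * B1 (i + 1) * h (i + 1) i)ᵀ))
        xv hM0 N hMsym (fun i _ => hrecN i)
      rw [hxvz (N + 1) le_rfl] at hss
      simpa using hss
    have hSsq : ∀ i : ℕ, i ≤ N →
        xv i ⬝ᵥ ((-((A i)ᵀ * Q i + Q i * A i) - (Q i * B1 i * h i i + (Q i * B1 i * h i i)ᵀ) - ε i • (1 : Matrix (Fin (n i)) (Fin (n i)) ℝ)) *ᵥ xv i)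
          = -2 * (xv i ⬝ᵥ ((Q i * A i) *ᵥ xv i)) - 2 * (xv i ⬝ᵥ ((Q i * B1 i * h i i) *ᵥ xv i)) - ε i * (xv i ⬝ᵥ xv i) := by
      intro i hi
      have hQT : (Q i)ᵀ = Q i := hQiT ⟨i, by omega⟩
      have hAT : (A i)ᵀ * Q i = (Q i * A i)ᵀ := by rw [transpose_mul, hQT]
      rw [sub_mulVec, sub_mulVec, dotProduct_sub, dotProduct_sub, neg_mulVec, dotProduct_neg,
        add_mulVec, add_mulVec, dotProduct_add, dotProduct_add, hAT, dot_transpose,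
        dot_transpose, smul_mulVec, one_mulVec, dotProduct_smul, smul_eq_mul]
      ring
    have hCrq : ∀ i : ℕ,
        xv i ⬝ᵥ ((Q i * B1 i * h i (i + 1) + (Q (i + 1) * B1 (i + 1) * h (i + 1) i)ᵀ) *ᵥ xv (i + 1)) + ((Q i * B1 i * h i (i + 1) + (Q (i + 1) * B1 (i + 1) * h (i + 1) i)ᵀ) *ᵥ xv (i + 1)) ⬝ᵥ xv i
          = 2 * ((xv i ⬝ᵥ ((Q i * B1 i * h i (i + 1)) *ᵥ xv (i + 1))) + (xv (i + 1) ⬝ᵥ ((Q (i + 1) * B1 (i + 1) * h (i + 1) i) *ᵥ xv i))) := by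
      intro i
      rw [dotProduct_comm ((Q i * B1 i * h i (i + 1) + (Q (i + 1) * B1 (i + 1) * h (i + 1) i)ᵀ) *ᵥ xv (i + 1)) (xv i), add_mulVec, dotProduct_add, dot_tr,
        dotProduct_comm ((Q (i + 1) * B1 (i + 1) * h (i + 1) i) *ᵥ xv i) (xv (i + 1))]
      ring
    have key2' : ∑ i ∈ Finset.range (N + 1), ((xv i - (M i)⁻¹ *ᵥ ((Q i * B1 i * h i (i + 1) + (Q (i + 1) * B1 (i + 1) * h (i + 1) i)ᵀ) *ᵥ xv (i + 1))) ⬝ᵥ (M i *ᵥ (xv i - (M i)⁻¹ *ᵥ ((Q i * B1 i * h i (i + 1) + (Q (i + 1) * B1 (i + 1) * h (i + 1) i)ᵀ) *ᵥ xv (i + 1)))))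
        = ∑ i ∈ Finset.range (N + 1), (-2 * (xv i ⬝ᵥ ((Q i * A i) *ᵥ xv i)) - 2 * (xv i ⬝ᵥ ((Q i * B1 i * h i i) *ᵥ xv i)) - ε i * (xv i ⬝ᵥ xv i))
          - ∑ i ∈ Finset.range N, 2 * ((xv i ⬝ᵥ ((Q i * B1 i * h i (i + 1)) *ᵥ xv (i + 1))) + (xv (i + 1) ⬝ᵥ ((Q (i + 1) * B1 (i + 1) * h (i + 1) i) *ᵥ xv i))) := by
      rw [key2]
      congr 1
      · exact Finset.sum_congr rfl fun i hi => hSsq i (by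
          have := Finset.mem_range.mp hi; omega)
      · exact Finset.sum_congr rfl fun i _ => hCrq i
    have hmerge : ∑ i ∈ Finset.range (N + 1), (-2 * (xv i ⬝ᵥ ((Q i * A i) *ᵥ xv i)) - 2 * (xv i ⬝ᵥ ((Q i * B1 i * h i i) *ᵥ xv i)) - εmin * (xv i ⬝ᵥ xv i))
        = ∑ i ∈ Finset.range (N + 1),
            ((-2 * (xv i ⬝ᵥ ((Q i * A i) *ᵥ xv i)) - 2 * (xv i ⬝ᵥ ((Q i * B1 i * h i i) *ᵥ xv i)) - ε i * (xv i ⬝ᵥ xv i)) + (ε i - εmin) * (xv i ⬝ᵥ xv i)) :=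
      Finset.sum_congr rfl fun i _ => by ring
    have total : x ⬝ᵥ ((-((Matrix.blockDiagonal' (fun i : Fin (N + 1) => A (i : ℕ))) + (Matrix.blockDiagonal' (fun i : Fin (N + 1) => B1 (i : ℕ))) * H)ᵀ * (Matrix.blockDiagonal' (fun i : Fin (N + 1) => Q (i : ℕ))) - (Matrix.blockDiagonal' (fun i : Fin (N + 1) => Q (i : ℕ))) * ((Matrix.blockDiagonal' (fun i : Fin (N + 1) => A (i : ℕ))) + (Matrix.blockDiagonal' (fun i : Fin (N + 1) => B1 (i : ℕ))) * H) - εmin • 1) *ᵥ x)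
        = ∑ i ∈ Finset.range (N + 1), (((xv i - (M i)⁻¹ *ᵥ ((Q i * B1 i * h i (i + 1) + (Q (i + 1) * B1 (i + 1) * h (i + 1) i)ᵀ) *ᵥ xv (i + 1))) ⬝ᵥ (M i *ᵥ (xv i - (M i)⁻¹ *ᵥ ((Q i * B1 i * h i (i + 1) + (Q (i + 1) * B1 (i + 1) * h (i + 1) i)ᵀ) *ᵥ xv (i + 1))))) + (ε i - εmin) * (xv i ⬝ᵥ xv i)) := by
      rw [key, Finset.sum_add_distrib, key2', hmerge, Finset.sum_add_distrib]
      ring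
    rw [total]
    have hεle : ∀ i : ℕ, i < N + 1 → εmin ≤ ε i := by
      intro i hi
      rw [hεmin]
      exact Finset.inf'_le _ (Finset.mem_univ (⟨i, hi⟩ : Fin (N + 1)))
    have hsqnn : ∀ i : ℕ, 0 ≤ (xv i ⬝ᵥ xv i) := fun i =>
      Finset.sum_nonneg fun a _ => mul_self_nonneg _
    have hMq : ∀ i : ℕ, i < N + 1 → ∀ v : Fin (n i) → ℝ, 0 ≤ v ⬝ᵥ (M i *ᵥ v) := by
      intro i hi v
      have hp : (M i).PosDef := hMpos ⟨i, hi⟩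
      have := hp.posSemidef.dotProduct_mulVec_nonneg v
      rwa [show star v = v from funext fun a => star_trivial _] at this
    have hMqpos : ∀ i : ℕ, i < N + 1 → ∀ v : Fin (n i) → ℝ, v ≠ 0 → 0 < v ⬝ᵥ (M i *ᵥ v) := by
      intro i hi v hv
      have hp : (M i).PosDef := hMpos ⟨i, hi⟩
      have := hp.dotProduct_mulVec_pos hv
      rwa [show star v = v from funext fun a => star_trivial _] at this
    refine Finset.sum_pos' (fun i hi => ?_) ?_
    · have hi' := Finset.mem_range.mp hi
      have h1 : 0 ≤ ((xv i - (M i)⁻¹ *ᵥ ((Q i * B1 i * h i (i + 1) + (Q (i + 1) * B1 (i + 1) * h (i + 1) i)ᵀ) *ᵥ xv (i + 1))) ⬝ᵥ (M i *ᵥ (xv i - (M i)⁻¹ *ᵥ ((Q i * B1 i * h i (i + 1) + (Q (i + 1) * B1 (i + 1) * h (i + 1) i)ᵀ) *ᵥ xv (i + 1))))) := hMq i hi' _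
      have h2 : 0 ≤ (ε i - εmin) * (xv i ⬝ᵥ xv i) :=
        mul_nonneg (sub_nonneg.mpr (hεle i hi')) (hsqnn i)
      linarith
    · obtain ⟨q, hq⟩ := Function.ne_iff.mp hx
      have hqi : xv (q.1 : ℕ) ≠ 0 := by
        rw [← hxv q.1]
        intro h0
        exact hq (congrFun h0 q.2)
      obtain ⟨j, hjmem, hjmax⟩ :
          ∃ j ∈ (Finset.range (N + 1)).filter (fun j => xv j ≠ 0),
            ∀ k ∈ (Finset.range (N + 1)).filter (fun j => xv j ≠ 0), k ≤ j := by
        have hsne : ((Finset.range (N + 1)).filter (fun j => xv j ≠ 0)).Nonempty :=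
          ⟨(q.1 : ℕ), Finset.mem_filter.mpr ⟨Finset.mem_range.mpr q.1.isLt, hqi⟩⟩
        exact ⟨_, Finset.max'_mem _ hsne, fun k hk => Finset.le_max' _ k hk⟩
      have hjr : j < N + 1 := Finset.mem_range.mp (Finset.mem_filter.mp hjmem).1
      have hxj : xv j ≠ 0 := (Finset.mem_filter.mp hjmem).2
      have hnext : xv (j + 1) = 0 := by
        by_cases hc : j + 1 < N + 1
        · by_contra hne
          have hmem : j + 1 ∈ (Finset.range (N + 1)).filter (fun j => xv j ≠ 0) :=
            Finset.mem_filter.mpr ⟨Finset.mem_range.mpr hc, hne⟩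
          have := hjmax _ hmem
          omega
        · exact hxvz _ (by omega)
      refine ⟨j, Finset.mem_range.mpr hjr, ?_⟩
      have hzj : (xv j - (M j)⁻¹ *ᵥ ((Q j * B1 j * h j (j + 1) + (Q (j + 1) * B1 (j + 1) * h (j + 1) j)ᵀ) *ᵥ xv (j + 1))) = xv j := by
        rw [hnext, mulVec_zero, mulVec_zero, sub_zero]
      have h1 : 0 < ((xv j - (M j)⁻¹ *ᵥ ((Q j * B1 j * h j (j + 1) + (Q (j + 1) * B1 (j + 1) * h (j + 1) j)ᵀ) *ᵥ xv (j + 1))) ⬝ᵥ (M j *ᵥ (xv j - (M j)⁻¹ *ᵥ ((Q j * B1 j * h j (j + 1) + (Q (j + 1) * B1 (j + 1) * h (j + 1) j)ᵀ) *ᵥ xv (j + 1))))) := by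
        rw [hzj]
        exact hMqpos j hjr (xv j) hxj
      have h2 : 0 ≤ (ε j - εmin) * (xv j ⬝ᵥ xv j) :=
        mul_nonneg (sub_nonneg.mpr (hεle j hjr)) (hsqnn j)
      linarith
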